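/- Let G = G_0 be a bipartite graph on n ≥ 2 vertices having a perfect matching, let k = ⌈log₂ n⌉ − 1, and let w_0, ..., w_{k−1} be positive integer weight functions on the edges of G. Define inductively G_{i+1} to be the subgraph of G_i consisting of the union of all perfect matchings of G_i of minimum w_i-weight, and suppose that for every 0 ≤ i ≤ k−1, every cycle of G_i of length at most 2^{i+2} has nonzero circulation under w_i. Let B be an integer exceeding the w_i-weight of every perfect matching of G for every i, and define w = Σ_{i=0}^{k−1} w_i · B^{k−1−i}. Then w is isolating for G: G has a unique perfect matching of minimum w-weight. -/

import Mathlib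

set_option linter.unusedSectionVars false
set_option maxHeartbeats 1600000

/-- `M` is a perfect matching of the graph on vertex set `V` with edge set `F`:
`M` consists of edges of `F` and every vertex lies in exactly one edge of `M`. -/
def IsPMof {V : Type*} (F M : Finset (Sym2 V)) : Prop :=
  M ⊆ F ∧ ∀ v : V, ∃! e, e ∈ M ∧ v ∈ e

/-- The weight of a matching is the sum of the weights of its edges. -/
def matchWeight {V : Type*} (w : Sym2 V → ℤ) (M : Finset (Sym2 V)) : ℤ := ∑ e ∈ M, w e

/-- The alternating sum `a₁ - a₂ + a₃ - ⋯` of a list. -/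
def altSum : List ℤ → ℤ
  | [] => 0
  | a :: l => a - altSum l

/-- The circulation of a cycle (given by the list of its edges in cyclic order):
the absolute value of the alternating sum of the edge weights. -/
def circulation {V : Type*} (w : Sym2 V → ℤ) (l : List (Sym2 V)) : ℤ :=
  |altSum (l.map w)|

namespace IsoAux
open Finset SimpleGraph

variable {V : Type*} [Fintype V] [DecidableEq V]

noncomputable def pmP (M : Finset (Sym2 V)) (v : V) : V :=
  if h : ∃ u, s(v, u) ∈ M then h.choose else v

lemma pmP_mem {F M : Finset (Sym2 V)} (hM : IsPMof F M) (v : V) : s(v, pmP M v) ∈ M := by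
  obtain ⟨e, ⟨heM, hve⟩, -⟩ := hM.2 v
  have h : ∃ u, s(v, u) ∈ M := ⟨Sym2.Mem.other' hve, by rwa [Sym2.other_spec' hve]⟩
  rw [pmP, dif_pos h]
  exact h.choose_spec

lemma pmP_eq {F M : Finset (Sym2 V)} (hM : IsPMof F M) {v u : V} (h : s(v, u) ∈ M) :
    u = pmP M v := by
  obtain ⟨e, -, huniq⟩ := hM.2 v
  have h1 := huniq _ ⟨h, Sym2.mem_mk_left v u⟩
  have h2 := huniq _ ⟨pmP_mem hM v, Sym2.mem_mk_left _ _⟩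
  exact (Sym2.congr_right).1 (h1.trans h2.symm)

lemma pm_edge_eq {F M : Finset (Sym2 V)} (hM : IsPMof F M) {v : V} {e : Sym2 V}
    (he : e ∈ M) (hv : v ∈ e) : e = s(v, pmP M v) := by
  rw [← Sym2.other_spec' hv] at he ⊢
  rw [Sym2.congr_right]
  exact pmP_eq hM he

lemma pmP_invol {F M : Finset (Sym2 V)} (hM : IsPMof F M) (v : V) :
    pmP M (pmP M v) = v := by
  have := pmP_mem hM v
  rw [Sym2.eq_swap] at this
  exact (pmP_eq hM this).symm

lemma pmP_ne {F M : Finset (Sym2 V)} (hM : IsPMof F M)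
    (hF : ∀ e ∈ F, ¬ e.IsDiag) (v : V) : pmP M v ≠ v := by
  intro h
  have := pmP_mem hM v
  rw [h] at this
  exact hF _ (hM.1 this) (Sym2.mk_isDiag_iff.2 rfl)

lemma mem_pm_iff {F M : Finset (Sym2 V)} (hM : IsPMof F M) {e : Sym2 V} :
    e ∈ M ↔ ∃ v, e = s(v, pmP M v) := by
  constructor
  · intro he
    induction e using Sym2.ind with
    | _ a b => exact ⟨a, pm_edge_eq hM he (Sym2.mem_mk_left a b)⟩
  · rintro ⟨v, rfl⟩; exact pmP_mem hM v

/-- the unique edge of `M` at `v`, as a filter -/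
lemma pm_filter {F M : Finset (Sym2 V)} (hM : IsPMof F M) (v : V) :
    M.filter (fun e => v ∈ e) = {s(v, pmP M v)} := by
  ext e
  simp only [mem_filter, mem_singleton]
  constructor
  · rintro ⟨he, hv⟩; exact pm_edge_eq hM he hv
  · rintro rfl; exact ⟨pmP_mem hM v, Sym2.mem_mk_left _ _⟩

/-! ### altSum -/

lemma altSum_range (m : ℕ) (f : ℕ → ℤ) :
    altSum ((List.range m).map f) = ∑ j ∈ Finset.range m, (-1 : ℤ) ^ j * f j := by
  induction m generalizing f with
  | zero => simp [altSum]
  | succ n ih =>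
    rw [List.range_succ_eq_map, List.map_cons, List.map_map]
    show f 0 - altSum ((List.range n).map (fun j => f (j+1))) = _
    rw [ih, Finset.sum_range_succ']
    have : (∑ x ∈ Finset.range n, (-1:ℤ)^(x+1) * f (x+1))
        = ∑ x ∈ Finset.range n, -((-1:ℤ)^x * f (x+1)) :=
      Finset.sum_congr rfl fun x _ => by ring
    rw [this, Finset.sum_neg_distrib]
    ring

/-! ### walk construction -/

def mkWalk (H : SimpleGraph V) (x : ℕ → V) :
    (m : ℕ) → (∀ j < m, H.Adj (x j) (x (j+1))) → H.Walk (x 0) (x m)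
  | 0, _ => Walk.nil
  | (m+1), h => (mkWalk H x m (fun j hj => h j (by omega))).concat (h m (by omega))

lemma mkWalk_edges (H : SimpleGraph V) (x : ℕ → V) (m : ℕ) (h : ∀ j < m, H.Adj (x j) (x (j+1))) :
    (mkWalk H x m h).edges = (List.range m).map (fun j => s(x j, x (j+1))) := by
  induction m with
  | zero => rfl
  | succ n ih =>
    rw [mkWalk, Walk.edges_concat, ih, List.range_succ, List.map_append]
    simp

lemma mkWalk_support (H : SimpleGraph V) (x : ℕ → V) (m : ℕ)
    (h : ∀ j < m, H.Adj (x j) (x (j+1))) :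
    (mkWalk H x m h).support = (List.range (m+1)).map x := by
  induction m with
  | zero => rfl
  | succ n ih =>
    rw [mkWalk, Walk.support_concat, ih, List.range_succ (n := n+1), List.map_append]
    simp

lemma mkWalk_length (H : SimpleGraph V) (x : ℕ → V) (m : ℕ)
    (h : ∀ j < m, H.Adj (x j) (x (j+1))) : (mkWalk H x m h).length = m := by
  rw [← Walk.length_edges, mkWalk_edges, List.length_map, List.length_range]


lemma exists_unmatched {F M M' : Finset (Sym2 V)} (hM : IsPMof F M) (hM' : IsPMof F M')
    (hne : M ≠ M') : ∃ a, s(a, pmP M a) ∉ M' := by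
  by_contra hc
  push_neg at hc
  apply hne
  ext e
  constructor
  · intro he
    obtain ⟨v, rfl⟩ := (mem_pm_iff hM).1 he
    exact hc v
  · intro he
    obtain ⟨v, rfl⟩ := (mem_pm_iff hM').1 he
    have h2 : pmP M v = pmP M' v := pmP_eq hM' (hc v)
    rw [← h2]
    exact pmP_mem hM v

structure AltCyc (M M' : Finset (Sym2 V)) where
  m : ℕ
  x : ℕ → V
  hm : 4 ≤ m
  heven : m % 2 = 0
  hinj : ∀ p < m, ∀ q < m, x p = x q → p = q
  hwrap : x m = x 0
  hedge : ∀ j < m, (j % 2 = 0 → s(x j, x (j+1)) ∈ M \ M') ∧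
      (j % 2 = 1 → s(x j, x (j+1)) ∈ M' \ M)

lemma bool_flip {a b : Bool} (h : a ≠ b) : b = !a := by revert h; cases a <;> cases b <;> decide

lemma exists_altCyc {F M M' : Finset (Sym2 V)} (col : V → Bool)
    (hcol : ∀ a b : V, s(a, b) ∈ F → col a ≠ col b)
    (hM : IsPMof F M) (hM' : IsPMof F M') (hne : M ≠ M') : Nonempty (AltCyc M M') := by
  classical
  set f := pmP M with hf
  set g := pmP M' with hg
  set σ := fun v => g (f v) with hσ
  obtain ⟨a, ha⟩ := exists_unmatched hM hM' hne
  have hσinj : Function.Injective σ := by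
    intro u v huv
    have h1 : f (g (σ u)) = f (g (σ v)) := by rw [huv]
    simpa [hσ, hg, hf, pmP_invol hM', pmP_invol hM] using h1
  have hσa : σ a ≠ a := by
    intro h
    apply ha
    have := pmP_mem hM' (f a)
    rw [show pmP M' (f a) = a from h] at this
    rwa [Sym2.eq_swap] at this
  -- fixed point freeness along the orbit
  have hfix : ∀ t : ℕ, σ (σ^[t] a) ≠ σ^[t] a := by
    intro t h
    apply hσa
    apply Function.Injective.iterate hσinj t
    rw [← Function.iterate_succ_apply σ t a, Function.iterate_succ_apply' σ t a, h]
  -- existence of a period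
  have hper : ∃ T, 0 < T ∧ σ^[T] a = a := by
    obtain ⟨i, j, hij, hEq⟩ := Finite.exists_ne_map_eq_of_infinite (fun t : ℕ => σ^[t] a)
    rcases Nat.lt_or_ge i j with h | h
    · refine ⟨j - i, by omega, ?_⟩
      apply Function.Injective.iterate hσinj i
      rw [← Function.iterate_add_apply]
      rw [show i + (j - i) = j by omega]
      exact hEq.symm
    · have hij' : j < i := by omega
      refine ⟨i - j, by omega, ?_⟩
      apply Function.Injective.iterate hσinj j
      rw [← Function.iterate_add_apply]
      rw [show j + (i - j) = i by omega]
      exact hEq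
  obtain ⟨T, hTpos, hTfix, hTmin⟩ :
      ∃ T, 0 < T ∧ σ^[T] a = a ∧ ∀ t, 0 < t → t < T → σ^[t] a ≠ a :=
    ⟨Nat.find hper, (Nat.find_spec hper).1, (Nat.find_spec hper).2,
      fun t ht htT hEq => Nat.find_min hper htT ⟨ht, hEq⟩⟩
  have hT2 : 2 ≤ T := by
    by_contra h
    have h1 : T = 1 := by omega
    rw [h1, Function.iterate_one] at hTfix
    exact hσa hTfix
  -- evens distinct
  have hevens : ∀ t < T, ∀ s < T, σ^[t] a = σ^[s] a → t = s := by
    have key : ∀ t s, t < s → s < T → σ^[t] a = σ^[s] a → False := by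
      intro t s hts hsT hEq
      apply hTmin (s - t) (by omega) (by omega)
      apply Function.Injective.iterate hσinj t
      rw [← Function.iterate_add_apply]
      rw [show t + (s - t) = s by omega]
      exact hEq.symm
    intro t ht s hs hEq
    rcases Nat.lt_trichotomy t s with h | h | h
    · exact absurd hEq (fun hE => key t s h hs hE)
    · exact h
    · exact absurd hEq.symm (fun hE => key s t h ht hE)
  set x : ℕ → V := fun j => if j % 2 = 0 then σ^[j / 2] a else f (σ^[j / 2] a) with hx
  -- M-edges along orbit
  have hMedge : ∀ t : ℕ, s(σ^[t] a, f (σ^[t] a)) ∈ M ∧ s(σ^[t] a, f (σ^[t] a)) ∉ M' := by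
    intro t
    refine ⟨pmP_mem hM _, ?_⟩
    intro hmem
    apply hfix t
    have h0 : σ^[t] a = pmP M' (f (σ^[t] a)) := by
      apply pmP_eq hM'
      rwa [Sym2.eq_swap]
    exact h0.symm
  -- M'-edges along orbit
  have hM'edge : ∀ t : ℕ,
      s(f (σ^[t] a), σ^[t+1] a) ∈ M' ∧ s(f (σ^[t] a), σ^[t+1] a) ∉ M := by
    intro t
    have hit : σ^[t+1] a = g (f (σ^[t] a)) := Function.iterate_succ_apply' σ t a
    constructor
    · rw [hit]; exact pmP_mem hM' _
    · intro hmem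
      apply hfix t
      have h1 : σ^[t+1] a = pmP M (f (σ^[t] a)) := pmP_eq hM hmem
      have h2 : σ^[t] a = pmP M (f (σ^[t] a)) := by
        apply pmP_eq hM
        have := pmP_mem hM (σ^[t] a)
        rwa [Sym2.eq_swap] at this
      have h3 : σ^[t+1] a = σ^[t] a := h1.trans h2.symm
      rw [Function.iterate_succ_apply'] at h3
      exact h3
  -- colors
  have hcolt : ∀ t : ℕ, col (σ^[t] a) = col a ∧ col (f (σ^[t] a)) = !(col a) := by
    intro t
    induction t with
    | zero =>
      refine ⟨by simp, ?_⟩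
      simp only [Function.iterate_zero_apply]
      exact bool_flip (hcol a (f a) (hM.1 (pmP_mem hM a)))
    | succ n ih =>
      have hit : σ^[n+1] a = g (f (σ^[n] a)) := Function.iterate_succ_apply' σ n a
      have h1 : col (σ^[n+1] a) = !(col (f (σ^[n] a))) := by
        rw [hit]
        exact bool_flip (hcol _ _ (hM'.1 (by rw [← hit]; exact (hM'edge n).1)))
      have h2 : col (σ^[n+1] a) = col a := by
        rw [h1, ih.2, Bool.not_not]
      refine ⟨h2, ?_⟩
      have h3 : col (f (σ^[n+1] a)) = !(col (σ^[n+1] a)) :=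
        bool_flip (hcol _ _ (hM.1 (pmP_mem hM _)))
      rw [h3, h2]
  have hcolx : ∀ j : ℕ, col (x j) = if j % 2 = 0 then col a else !(col a) := by
    intro j
    by_cases hj : j % 2 = 0 <;> simp only [hx, hj, if_pos, if_neg, if_true, if_false]
    · simp [hj, (hcolt (j/2)).1]
    · simp [hj, (hcolt (j/2)).2]
  -- injectivity
  have hinj : ∀ p < 2 * T, ∀ q < 2 * T, x p = x q → p = q := by
    intro p hp q hq hEq
    by_cases hp2 : p % 2 = 0 <;> by_cases hq2 : q % 2 = 0
    · have : σ^[p/2] a = σ^[q/2] a := by simpa [hx, hp2, hq2] using hEq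
      have := hevens (p/2) (by omega) (q/2) (by omega) this
      omega
    · exfalso
      have h1 := hcolx p
      have h2 := hcolx q
      rw [hEq] at h1
      rw [h1, if_pos hp2, if_neg hq2] at h2
      simp at h2
    · exfalso
      have h1 := hcolx p
      have h2 := hcolx q
      rw [hEq] at h1
      rw [h1, if_neg hp2, if_pos hq2] at h2
      simp at h2
    · have hfe : f (σ^[p/2] a) = f (σ^[q/2] a) := by simpa [hx, hp2, hq2] using hEq
      have : σ^[p/2] a = σ^[q/2] a := by
        have h1 : pmP M (f (σ^[p/2] a)) = pmP M (f (σ^[q/2] a)) := by rw [hfe]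
        simpa [hf, pmP_invol hM] using h1
      have := hevens (p/2) (by omega) (q/2) (by omega) this
      omega
  have hwrap : x (2 * T) = x 0 := by
    have e1 : x (2 * T) = σ^[T] a := by
      simp only [hx]
      rw [if_pos (show 2 * T % 2 = 0 by omega), show 2 * T / 2 = T by omega]
    have e2 : x 0 = a := by simp [hx]
    rw [e1, e2, hTfix]
  refine ⟨⟨2 * T, x, by omega, by omega, hinj, hwrap, ?_⟩⟩
  intro j hj
  constructor
  · intro hj2
    have he1 : x j = σ^[j/2] a := by simp [hx, hj2]
    have he2 : x (j+1) = f (σ^[j/2] a) := by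
      have : (j+1) % 2 = 1 := by omega
      have hd : (j+1) / 2 = j / 2 := by omega
      simp [hx, this, hd]
    rw [he1, he2]
    have := hMedge (j/2)
    exact Finset.mem_sdiff.2 ⟨this.1, this.2⟩
  · intro hj2
    have he1 : x j = f (σ^[j/2] a) := by simp [hx, hj2]
    have he2 : x (j+1) = σ^[j/2 + 1] a := by
      have h1 : (j+1) % 2 = 0 := by omega
      have hd : (j+1) / 2 = j / 2 + 1 := by omega
      simp [hx, h1, hd]
    rw [he1, he2]
    have := hM'edge (j/2)
    exact Finset.mem_sdiff.2 ⟨this.1, this.2⟩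


variable {M M' : Finset (Sym2 V)}


def AltCyc.e (ac : AltCyc M M') (j : ℕ) : Sym2 V := s(ac.x j, ac.x (j+1))

lemma AltCyc.e_mem_union (ac : AltCyc M M') {j : ℕ} (hj : j < ac.m) :
    ac.e j ∈ M ∪ M' := by
  have := ac.hedge j hj
  rcases Nat.mod_two_eq_zero_or_one j with h | h
  · exact Finset.mem_union_left _ (Finset.mem_sdiff.1 (this.1 h)).1
  · exact Finset.mem_union_right _ (Finset.mem_sdiff.1 (this.2 h)).1

lemma AltCyc.hinj' (ac : AltCyc M M') : ∀ p ≤ ac.m, ∀ q ≤ ac.m, ac.x p = ac.x q →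
    p = q ∨ (p = 0 ∧ q = ac.m) ∨ (p = ac.m ∧ q = 0) := by
  intro p hp q hq hEq
  rcases Nat.lt_or_ge p ac.m with hp' | hp'
  · rcases Nat.lt_or_ge q ac.m with hq' | hq'
    · exact Or.inl (ac.hinj p hp' q hq' hEq)
    · have hqm : q = ac.m := by omega
      subst hqm
      rw [ac.hwrap] at hEq
      have := ac.hinj p hp' 0 (by omega) hEq
      omega
  · have hpm : p = ac.m := by omega
    subst hpm
    rcases Nat.lt_or_ge q ac.m with hq' | hq'
    · rw [ac.hwrap] at hEq
      have := ac.hinj 0 (by omega) q hq' hEq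
      omega
    · omega

lemma AltCyc.e_ne (ac : AltCyc M M') {j : ℕ} (hj : j < ac.m) : ac.x j ≠ ac.x (j+1) := by
  intro h
  have := ac.hinj' j (by omega) (j+1) (by omega) h
  have := ac.hm
  omega

lemma AltCyc.e_inj (ac : AltCyc M M') : ∀ p < ac.m, ∀ q < ac.m, ac.e p = ac.e q → p = q := by
  intro p hp q hq hEq
  have hm := ac.hm
  rw [AltCyc.e, AltCyc.e, Sym2.eq_iff] at hEq
  rcases hEq with ⟨h1, h2⟩ | ⟨h1, h2⟩
  · exact ac.hinj p hp q hq h1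
  · have ha := ac.hinj' p (by omega) (q+1) (by omega) h1
    have hb := ac.hinj' (p+1) (by omega) q (by omega) h2
    omega

lemma AltCyc.mem_e_iff (ac : AltCyc M M') {v : V} {j : ℕ} (hj : j < ac.m) :
    v ∈ ac.e j ↔ v = ac.x j ∨ v = ac.x (j+1) := by
  rw [AltCyc.e, Sym2.mem_iff]

/-- every vertex on the cycle is in exactly one even-indexed and one odd-indexed edge -/
lemma AltCyc.incident (ac : AltCyc M M') {v : V} {r : ℕ} (hr : r < ac.m) (hv : v = ac.x r) :
    ∃ p q, p < ac.m ∧ q < ac.m ∧ p % 2 = 0 ∧ q % 2 = 1 ∧ v ∈ ac.e p ∧ v ∈ ac.e q ∧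
      (∀ j < ac.m, v ∈ ac.e j → j = p ∨ j = q) := by
  have hm := ac.hm
  have hme := ac.heven
  obtain ⟨prev, hprevm, hpar, hvprev, hprevchar⟩ :
      ∃ p, p < ac.m ∧ p % 2 ≠ r % 2 ∧ v ∈ ac.e p ∧
        (∀ j < ac.m, v = ac.x (j+1) → j = p) := by
    rcases Nat.eq_zero_or_pos r with h0 | h0
    · refine ⟨ac.m - 1, by omega, by omega, ?_, ?_⟩
      · rw [ac.mem_e_iff (by omega : ac.m - 1 < ac.m)]
        right
        rw [show ac.m - 1 + 1 = ac.m by omega, ac.hwrap, hv, h0]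
      · intro j hjm hj
        have := ac.hinj' (j+1) (by omega) r (by omega) (hj.symm.trans hv)
        omega
    · refine ⟨r - 1, by omega, by omega, ?_, ?_⟩
      · rw [ac.mem_e_iff (by omega : r - 1 < ac.m)]
        right
        rw [show r - 1 + 1 = r by omega, hv]
      · intro j hjm hj
        have := ac.hinj' (j+1) (by omega) r (by omega) (hj.symm.trans hv)
        omega
  have hvr : v ∈ ac.e r := (ac.mem_e_iff hr).2 (Or.inl hv)
  have honly : ∀ j < ac.m, v ∈ ac.e j → j = r ∨ j = prev := by
    intro j hjm hj
    rcases (ac.mem_e_iff hjm).1 hj with h | h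
    · exact Or.inl (ac.hinj j hjm r hr (h.symm.trans hv))
    · exact Or.inr (hprevchar j hjm h)
  rcases Nat.mod_two_eq_zero_or_one r with hr2 | hr2
  · exact ⟨r, prev, hr, hprevm, hr2, by omega, hvr, hvprev, honly⟩
  · exact ⟨prev, r, hprevm, hr, by omega, hr2, hvprev, hvr,
      fun j hjm hj => (honly j hjm hj).symm⟩

lemma AltCyc.not_incident (ac : AltCyc M M') {v : V} (hv : ∀ r < ac.m, v ≠ ac.x r) :
    ∀ j < ac.m, v ∉ ac.e j := by
  intro j hj hmem
  rcases (ac.mem_e_iff hj).1 hmem with h | h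
  · exact hv j hj h
  · rcases Nat.lt_or_ge (j+1) ac.m with h' | h'
    · exact hv (j+1) h' h
    · have hj1 : j + 1 = ac.m := by omega
      rw [hj1, ac.hwrap] at h
      exact hv 0 (by omega) h


lemma AltCyc.exists_walk (ac : AltCyc M M') {F : Finset (Sym2 V)}
    (hMF : M ⊆ F) (hM'F : M' ⊆ F) :
    ∃ c : (SimpleGraph.fromEdgeSet (↑F : Set (Sym2 V))).Walk (ac.x 0) (ac.x 0),
      c.IsCycle ∧ c.edges = (List.range ac.m).map ac.e ∧ c.length = ac.m := by
  have hm := ac.hm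
  have hadj : ∀ j < ac.m,
      (SimpleGraph.fromEdgeSet (↑F : Set (Sym2 V))).Adj (ac.x j) (ac.x (j+1)) := by
    intro j hj
    rw [SimpleGraph.fromEdgeSet_adj]
    refine ⟨?_, ac.e_ne hj⟩
    have := ac.e_mem_union hj
    rw [Finset.mem_union] at this
    rcases this with h | h
    · exact_mod_cast Finset.mem_coe.2 (hMF h)
    · exact_mod_cast Finset.mem_coe.2 (hM'F h)
  let p := mkWalk _ ac.x ac.m hadj
  refine ⟨p.copy rfl ac.hwrap, ?_, ?_, ?_⟩
  · rw [Walk.isCycle_def]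
    refine ⟨⟨?_⟩, ?_, ?_⟩
    · -- edges nodup
      rw [Walk.edges_copy, mkWalk_edges]
      apply List.Nodup.map_on ?_ List.nodup_range
      intro i hi j hj hEq
      simp only [List.mem_range] at hi hj
      exact ac.e_inj i hi j hj hEq
    · -- not nil
      intro hnil
      have h1 : (p.copy rfl ac.hwrap).length = ac.m := by
        rw [Walk.length_copy, mkWalk_length]
      rw [hnil] at h1
      simp at h1
      omega
    · -- support tail nodup
      rw [Walk.support_copy, mkWalk_support]
      rw [List.range_succ_eq_map, List.map_cons, List.tail_cons, List.map_map]
      apply List.Nodup.map_on ?_ List.nodup_range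
      intro i hi j hj hEq
      simp only [List.mem_range] at hi hj
      have := ac.hinj' (i+1) (by omega) (j+1) (by omega) hEq
      omega
  · rw [Walk.edges_copy, mkWalk_edges]
    rfl
  · rw [Walk.length_copy, mkWalk_length]


/-- degree of `v` with multiplicity `y` -/
def degy (y : Sym2 V → ℤ) (v : V) : ℤ := ∑ e ∈ Finset.univ.filter (fun e : Sym2 V => v ∈ e), y e

lemma degy_eq_sum (y : Sym2 V → ℤ) (v : V) :
    degy y v = ∑ b : V, y s(v, b) := by
  rw [degy]
  rw [show Finset.univ.filter (fun e : Sym2 V => v ∈ e)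
      = Finset.univ.image (fun b => s(v, b)) by
    ext e
    simp only [mem_filter, mem_univ, true_and, mem_image]
    constructor
    · intro hv
      exact ⟨Sym2.Mem.other' hv, (Sym2.other_spec' hv)⟩
    · rintro ⟨b, rfl⟩
      exact Sym2.mem_mk_left v b]
  rw [Finset.sum_image]
  intro b _ b' _ h
  exact Sym2.congr_right.1 h

lemma degy_sub (y z : Sym2 V → ℤ) (v : V) : degy (fun e => y e - z e) v = degy y v - degy z v :=
  Finset.sum_sub_distrib _ _


variable {F : Finset (Sym2 V)} {col : V → Bool}


lemma hall_pm (hcol : ∀ a b : V, s(a, b) ∈ F → col a ≠ col b)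
    (y : Sym2 V → ℤ) (hynn : ∀ e, 0 ≤ y e) (hsupp : ∀ e, y e ≠ 0 → e ∈ F)
    (r : ℕ) (hr : 1 ≤ r) (hdeg : ∀ v, degy y v = r) :
    ∃ N, IsPMof F N ∧ ∀ e ∈ N, 1 ≤ y e := by
  classical
  set A : Finset V := Finset.univ.filter (fun v => col v = false) with hA
  set Bs : Finset V := Finset.univ.filter (fun v => col v = true) with hBs
  have hyzero : ∀ a b : V, col a = col b → y s(a, b) = 0 := by
    intro a b h
    by_contra hy
    exact (hcol a b (hsupp _ hy)) h
  have hdegA : ∀ a : V, col a = false → degy y a = ∑ b ∈ Bs, y s(a, b) := by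
    intro a ha
    rw [degy_eq_sum]
    refine (Finset.sum_subset (Finset.subset_univ Bs) ?_).symm
    intro b _ hb
    simp only [hBs, mem_filter, mem_univ, true_and] at hb
    refine hyzero a b ?_
    rw [Bool.not_eq_true] at hb
    rw [ha, hb]
  have hdegB : ∀ b : V, col b = true → degy y b = ∑ a ∈ A, y s(a, b) := by
    intro b hb
    rw [degy_eq_sum]
    have h1 : ∀ a : V, y s(b, a) = y s(a, b) := fun a => by rw [Sym2.eq_swap]
    rw [Finset.sum_congr rfl (fun a _ => h1 a)]
    refine (Finset.sum_subset (Finset.subset_univ A) ?_).symm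
    intro a _ hai
    simp only [hA, mem_filter, mem_univ, true_and] at hai
    rw [Bool.not_eq_false] at hai
    exact hyzero a b (by rw [hai, hb])
  set t : V → Finset V := fun a => Bs.filter (fun b => 0 < y s(a, b)) with ht
  -- degree of a false vertex localizes to t a
  have hdegA' : ∀ a : V, col a = false → degy y a = ∑ b ∈ t a, y s(a, b) := by
    intro a ha
    rw [hdegA a ha, ht]
    refine (Finset.sum_filter_of_ne ?_).symm
    intro b _ hb
    rcases lt_or_eq_of_le (hynn s(a, b)) with h | h
    · exact h
    · exact absurd h.symm hb
  have hallcond : ∀ S : Finset {a : V // col a = false},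
      S.card ≤ (S.biUnion (fun a => t a.1)).card := by
    intro S
    set W := S.biUnion (fun a => t a.1) with hW
    have key : (r : ℤ) * S.card ≤ (r : ℤ) * W.card := by
      have e1 : (r : ℤ) * S.card = ∑ a ∈ S, degy y a.1 := by
        rw [Finset.sum_congr rfl (fun a _ => hdeg a.1), Finset.sum_const, nsmul_eq_mul,
          mul_comm]
      have e2 : ∑ a ∈ S, degy y a.1 = ∑ a ∈ S, ∑ b ∈ t a.1, y s(a.1, b) :=
        Finset.sum_congr rfl (fun a _ => hdegA' a.1 a.2)
      have e3 : ∑ a ∈ S, ∑ b ∈ t a.1, y s(a.1, b) ≤ ∑ a ∈ S, ∑ b ∈ W, y s(a.1, b) := by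
        apply Finset.sum_le_sum
        intro a ha
        apply Finset.sum_le_sum_of_subset_of_nonneg (Finset.subset_biUnion_of_mem _ ha)
        intro b _ _
        exact hynn _
      have e4 : ∑ a ∈ S, ∑ b ∈ W, y s(a.1, b) = ∑ b ∈ W, ∑ a ∈ S, y s(a.1, b) :=
        Finset.sum_comm
      have e5 : ∀ b ∈ W, ∑ a ∈ S, y s(a.1, b) ≤ degy y b := by
        intro b hbW
        have hbB : col b = true := by
          rw [hW] at hbW
          obtain ⟨a, _, hb⟩ := Finset.mem_biUnion.1 hbW
          exact (Finset.mem_filter.1 (Finset.mem_filter.1 hb).1).2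
        rw [hdegB b hbB]
        have himg : ∑ a ∈ S, y s(a.1, b) = ∑ a ∈ S.image Subtype.val, y s(a, b) := by
          rw [Finset.sum_image]
          intro u _ u' _ h
          exact Subtype.ext h
        rw [himg]
        apply Finset.sum_le_sum_of_subset_of_nonneg
        · intro a haim
          obtain ⟨u, _, rfl⟩ := Finset.mem_image.1 haim
          simp only [hA, mem_filter, mem_univ, true_and]
          exact u.2
        · intro a _ _
          exact hynn _
      have e6 : ∑ b ∈ W, degy y b = (r : ℤ) * W.card := by
        rw [Finset.sum_congr rfl (fun b _ => hdeg b), Finset.sum_const, nsmul_eq_mul,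
          mul_comm]
      calc (r : ℤ) * S.card = ∑ a ∈ S, ∑ b ∈ t a.1, y s(a.1, b) := by rw [e1, e2]
        _ ≤ ∑ a ∈ S, ∑ b ∈ W, y s(a.1, b) := e3
        _ = ∑ b ∈ W, ∑ a ∈ S, y s(a.1, b) := e4
        _ ≤ ∑ b ∈ W, degy y b := Finset.sum_le_sum e5
        _ = (r : ℤ) * W.card := e6
    have := le_of_mul_le_mul_left key (by exact_mod_cast hr : (0 : ℤ) < r)
    exact_mod_cast this
  obtain ⟨f, hfinj, hft⟩ := (Finset.all_card_le_biUnion_card_iff_exists_injective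
    (fun a : {a : V // col a = false} => t a.1)).1 hallcond
  have hfB : ∀ a, col (f a) = true := fun a => (Finset.mem_filter.1 (Finset.mem_filter.1 (hft a)).1).2
  have hfy : ∀ a, 0 < y s(a.1, f a) := fun a => (Finset.mem_filter.1 (hft a)).2
  -- card A = card Bs
  have hAB : A.card = Bs.card := by
    have h1 : (r : ℤ) * A.card = ∑ a ∈ A, ∑ b ∈ Bs, y s(a, b) := by
      rw [← Finset.sum_congr rfl (fun a (ha : a ∈ A) =>
        hdegA a (Finset.mem_filter.1 ha).2), Finset.sum_congr rfl (fun a _ => hdeg a),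
        Finset.sum_const, nsmul_eq_mul, mul_comm]
    have h2 : (r : ℤ) * Bs.card = ∑ b ∈ Bs, ∑ a ∈ A, y s(a, b) := by
      rw [← Finset.sum_congr rfl (fun b (hb : b ∈ Bs) =>
        hdegB b (Finset.mem_filter.1 hb).2), Finset.sum_congr rfl (fun b _ => hdeg b),
        Finset.sum_const, nsmul_eq_mul, mul_comm]
    have h3 : (r : ℤ) * A.card = (r : ℤ) * Bs.card := by
      rw [h1, h2, Finset.sum_comm]
    have hrne : (r : ℤ) ≠ 0 := by exact_mod_cast (by omega : r ≠ 0)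
    have := mul_left_cancel₀ hrne h3
    exact_mod_cast this
  set N : Finset (Sym2 V) :=
    Finset.univ.image (fun a : {a : V // col a = false} => s(a.1, f a)) with hN
  have hyN : ∀ e ∈ N, 1 ≤ y e := by
    intro e he
    obtain ⟨a, _, rfl⟩ := Finset.mem_image.1 he
    have := hfy a
    omega
  have hNF : N ⊆ F := by
    intro e he
    apply hsupp
    have := hyN e he
    omega
  -- surjectivity of f onto Bs
  have hcardA : Fintype.card {a : V // col a = false} = A.card := by
    rw [hA, Fintype.card_subtype]
  have himgf : Finset.univ.image f = Bs := by
    apply Finset.eq_of_subset_of_card_le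
    · intro b hb
      obtain ⟨a, _, rfl⟩ := Finset.mem_image.1 hb
      simp only [hBs, mem_filter, mem_univ, true_and]
      exact hfB a
    · rw [Finset.card_image_of_injective _ hfinj, Finset.card_univ, hcardA, hAB]
  have hsurj : ∀ b : V, col b = true → ∃ a, f a = b := by
    intro b hb
    have : b ∈ Finset.univ.image f := by
      rw [himgf]
      simp only [hBs, mem_filter, mem_univ, true_and]
      exact hb
    obtain ⟨a, _, ha⟩ := Finset.mem_image.1 this
    exact ⟨a, ha⟩
  refine ⟨N, ⟨hNF, ?_⟩, hyN⟩
  intro v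
  rcases Bool.eq_false_or_eq_true (col v) with hv | hv
  · -- col v = true
    obtain ⟨a₀, ha₀⟩ := hsurj v hv
    refine ⟨s(a₀.1, f a₀), ⟨Finset.mem_image.2 ⟨a₀, Finset.mem_univ _, rfl⟩,
      by rw [ha₀]; exact Sym2.mem_mk_right _ _⟩, ?_⟩
    rintro e ⟨heN, hve⟩
    obtain ⟨a, _, rfl⟩ := Finset.mem_image.1 heN
    rcases Sym2.mem_iff.1 hve with h | h
    · exfalso
      have := a.2
      rw [← h, hv] at this
      exact absurd this (by decide)
    · have : a = a₀ := hfinj (by rw [← h, ha₀])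
      rw [this]
  · -- col v = false
    refine ⟨s(v, f ⟨v, hv⟩), ⟨Finset.mem_image.2 ⟨⟨v, hv⟩, Finset.mem_univ _, rfl⟩,
      Sym2.mem_mk_left _ _⟩, ?_⟩
    rintro e ⟨heN, hve⟩
    obtain ⟨a, _, rfl⟩ := Finset.mem_image.1 heN
    rcases Sym2.mem_iff.1 hve with h | h
    · have : a = ⟨v, hv⟩ := Subtype.ext h.symm
      rw [this]
    · exfalso
      have := hfB a
      rw [← h, hv] at this
      exact absurd this (by decide)


lemma degy_ind_card (S : Finset (Sym2 V)) (v : V) :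
    degy (fun e => if e ∈ S then (1 : ℤ) else 0) v = (S.filter (fun e => v ∈ e)).card := by
  rw [degy, Finset.sum_ite_mem]
  rw [show Finset.univ.filter (fun e : Sym2 V => v ∈ e) ∩ S = S.filter (fun e => v ∈ e) by
    ext e; simp only [Finset.mem_inter, mem_filter, mem_univ, true_and]; tauto]
  simp

lemma pm_degy_one {F N : Finset (Sym2 V)} (hN : IsPMof F N) (v : V) :
    degy (fun e => if e ∈ N then (1 : ℤ) else 0) v = 1 := by
  rw [degy_ind_card, pm_filter hN]
  simp


lemma decomp (hcol : ∀ a b : V, s(a, b) ∈ F → col a ≠ col b) :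
    ∀ (r : ℕ) (y : Sym2 V → ℤ), (∀ e, 0 ≤ y e) → (∀ e, y e ≠ 0 → e ∈ F) →
    (∀ v, degy y v = r) →
    ∃ Ms : Multiset (Finset (Sym2 V)), Ms.card = r ∧ (∀ N ∈ Ms, IsPMof F N) ∧
      ∀ e, y e = (Ms.map (fun N => if e ∈ N then (1 : ℤ) else 0)).sum := by
  intro r
  induction r with
  | zero =>
    intro y hnn hs hd
    refine ⟨0, rfl, by simp, ?_⟩
    intro e
    simp only [Multiset.map_zero, Multiset.sum_zero]
    induction e using Sym2.ind with
    | _ a b =>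
      have h0 := hd a
      rw [degy] at h0
      refine (Finset.sum_eq_zero_iff_of_nonneg (fun e _ => hnn e)).1 (by exact_mod_cast h0)
        s(a, b) ?_
      exact Finset.mem_filter.2 ⟨Finset.mem_univ _, Sym2.mem_mk_left a b⟩
  | succ n ih =>
    intro y hnn hs hd
    obtain ⟨N, hNpm, hyN⟩ := hall_pm hcol y hnn hs (n+1) (by omega) hd
    set y' : Sym2 V → ℤ := fun e => y e - (if e ∈ N then (1 : ℤ) else 0) with hy'
    have h1 : ∀ e, 0 ≤ y' e := by
      intro e
      by_cases he : e ∈ N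
      · have := hyN e he
        simp only [hy', he, if_pos]
        omega
      · simp only [hy', he, if_neg, if_false]
        have := hnn e
        omega
    have h2 : ∀ e, y' e ≠ 0 → e ∈ F := by
      intro e he
      by_cases heN : e ∈ N
      · exact hNpm.1 heN
      · apply hs
        simpa [hy', heN] using he
    have h3 : ∀ v, degy y' v = n := by
      intro v
      rw [hy', degy_sub, hd, pm_degy_one hNpm]
      push_cast
      ring
    obtain ⟨Ms, hc, hpm, hsum⟩ := ih y' h1 h2 h3
    refine ⟨N ::ₘ Ms, by simp [hc], ?_, ?_⟩
    · intro N' hN'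
      rcases Multiset.mem_cons.1 hN' with h | h
      · rw [h]; exact hNpm
      · exact hpm N' h
    · intro e
      rw [Multiset.map_cons, Multiset.sum_cons, ← hsum e]
      simp only [hy']
      ring

def IsMinPM (F : Finset (Sym2 V)) (w : Sym2 V → ℤ) (M : Finset (Sym2 V)) : Prop :=
  IsPMof F M ∧ ∀ M', IsPMof F M' → matchWeight w M ≤ matchWeight w M'

lemma sum_ind_mul (S : Finset (Sym2 V)) (w : Sym2 V → ℤ) :
    ∑ e : Sym2 V, (if e ∈ S then (1 : ℤ) else 0) * w e = ∑ e ∈ S, w e := by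
  simp only [ite_mul, one_mul, zero_mul]
  rw [Finset.sum_ite_mem, Finset.univ_inter]

lemma sum_multiset_ind (Ms : Multiset (Finset (Sym2 V))) (w : Sym2 V → ℤ) :
    ∑ e : Sym2 V, (Ms.map (fun N => if e ∈ N then (1 : ℤ) else 0)).sum * w e
      = (Ms.map (fun N => matchWeight w N)).sum := by
  induction Ms using Multiset.induction with
  | empty => simp
  | cons N Ms ih =>
    simp only [Multiset.map_cons, Multiset.sum_cons, add_mul, Finset.sum_add_distrib, ih]
    rw [sum_ind_mul]
    rfl


lemma circ_zero_aux (ac : AltCyc M M') (hcol : ∀ a b : V, s(a, b) ∈ F → col a ≠ col b)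
    (w : Sym2 V → ℤ)
    (hmin : ∀ j < ac.m, ∃ Mn, IsMinPM F w Mn ∧ ac.e j ∈ Mn)
    (par : ℕ) (hpar : par ≤ 1)
    (hgt : ∑ j ∈ (Finset.range ac.m).filter (fun j => ¬(j % 2 = par)), w (ac.e j) <
           ∑ j ∈ (Finset.range ac.m).filter (fun j => j % 2 = par), w (ac.e j)) : False := by
  classical
  have hm := ac.hm
  have hch : ∀ j : ℕ, ∃ Mn, j < ac.m → IsMinPM F w Mn ∧ ac.e j ∈ Mn := by
    intro j
    by_cases hj : j < ac.m
    · obtain ⟨Mn, h⟩ := hmin j hj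
      exact ⟨Mn, fun _ => h⟩
    · exact ⟨∅, fun h => absurd h hj⟩
  choose Msel hMsel using hch
  set μ := matchWeight w (Msel 0) with hμdef
  have h0m : 0 < ac.m := by omega
  have hμ : ∀ j < ac.m, matchWeight w (Msel j) = μ := by
    intro j hj
    exact le_antisymm ((hMsel j hj).1.2 _ (hMsel 0 h0m).1.1)
      ((hMsel 0 h0m).1.2 _ (hMsel j hj).1.1)
  set heavyC : Finset (Sym2 V) :=
    ((Finset.range ac.m).filter (fun j => j % 2 = par)).image ac.e with hheavy
  set lightC : Finset (Sym2 V) :=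
    ((Finset.range ac.m).filter (fun j => ¬(j % 2 = par))).image ac.e with hlight
  have hmemheavy : ∀ e', e' ∈ heavyC ↔ ∃ j < ac.m, j % 2 = par ∧ e' = ac.e j := by
    intro e'
    simp only [hheavy, Finset.mem_image, Finset.mem_filter, Finset.mem_range]
    constructor
    · rintro ⟨j, ⟨hj, hp⟩, rfl⟩; exact ⟨j, hj, hp, rfl⟩
    · rintro ⟨j, hj, hp, rfl⟩; exact ⟨j, ⟨hj, hp⟩, rfl⟩
  have hmemlight : ∀ e', e' ∈ lightC ↔ ∃ j < ac.m, ¬(j % 2 = par) ∧ e' = ac.e j := by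
    intro e'
    simp only [hlight, Finset.mem_image, Finset.mem_filter, Finset.mem_range]
    constructor
    · rintro ⟨j, ⟨hj, hp⟩, rfl⟩; exact ⟨j, hj, hp, rfl⟩
    · rintro ⟨j, hj, hp, rfl⟩; exact ⟨j, ⟨hj, hp⟩, rfl⟩
  set y : Sym2 V → ℤ := fun e' =>
    (∑ j ∈ Finset.range ac.m, if e' ∈ Msel j then (1 : ℤ) else 0)
      + (if e' ∈ lightC then (1 : ℤ) else 0) - (if e' ∈ heavyC then (1 : ℤ) else 0) with hy
  have hynn : ∀ e', 0 ≤ y e' := by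
    intro e'
    by_cases hh : e' ∈ heavyC
    · obtain ⟨j, hj, hp, rfl⟩ := (hmemheavy e').1 hh
      have h1 : (1 : ℤ) ≤ ∑ j' ∈ Finset.range ac.m, if ac.e j ∈ Msel j' then (1 : ℤ) else 0 := by
        have h := Finset.single_le_sum (f := fun j' => if ac.e j ∈ Msel j' then (1 : ℤ) else 0)
          (fun i _ => by positivity) (Finset.mem_range.2 hj)
        simpa [(hMsel j hj).2] using h
      have h2 : (0 : ℤ) ≤ if ac.e j ∈ lightC then (1 : ℤ) else 0 := by positivity
      simp only [hy]
      rw [if_pos hh]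
      omega
    · simp only [hy]
      rw [if_neg hh]
      have h1 : (0 : ℤ) ≤ ∑ j' ∈ Finset.range ac.m, if e' ∈ Msel j' then (1 : ℤ) else 0 := by
        positivity
      have h2 : (0 : ℤ) ≤ if e' ∈ lightC then (1 : ℤ) else 0 := by positivity
      omega
  have hsupp : ∀ e', y e' ≠ 0 → e' ∈ F := by
    intro e' hne
    by_contra hF'
    apply hne
    have hMs : ∀ j ∈ Finset.range ac.m, (if e' ∈ Msel j then (1 : ℤ) else 0) = 0 := by
      intro j hj
      rw [Finset.mem_range] at hj
      rw [if_neg]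
      intro hmem
      exact hF' ((hMsel j hj).1.1.1 hmem)
    have hl : e' ∉ lightC := by
      intro hmem
      obtain ⟨j, hj, -, rfl⟩ := (hmemlight e').1 hmem
      exact hF' ((hMsel j hj).1.1.1 (hMsel j hj).2)
    have hh : e' ∉ heavyC := by
      intro hmem
      obtain ⟨j, hj, -, rfl⟩ := (hmemheavy e').1 hmem
      exact hF' ((hMsel j hj).1.1.1 (hMsel j hj).2)
    simp only [hy]
    rw [Finset.sum_congr rfl hMs, if_neg hl, if_neg hh]
    simp
  -- the index-count identity
  have hcount : ∀ v : V,
      (((Finset.range ac.m).filter (fun j => j % 2 = par ∧ v ∈ ac.e j)).card : ℤ)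
      = (((Finset.range ac.m).filter (fun j => ¬(j % 2 = par) ∧ v ∈ ac.e j)).card : ℤ) := by
    intro v
    by_cases hv : ∃ r, r < ac.m ∧ v = ac.x r
    · obtain ⟨r, hr, hvr⟩ := hv
      obtain ⟨p, q, hp, hq, hp2, hq2, hvp, hvq, huniq⟩ := ac.incident hr hvr
      have hpar2 : par = 0 ∨ par = 1 := by omega
      rcases hpar2 with rfl | rfl
      · rw [show (Finset.range ac.m).filter (fun j => j % 2 = 0 ∧ v ∈ ac.e j) = {p} by
            ext j
            simp only [Finset.mem_filter, Finset.mem_range, Finset.mem_singleton]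
            constructor
            · rintro ⟨hj, hj2, hvj⟩
              rcases huniq j hj hvj with rfl | rfl
              · rfl
              · omega
            · rintro rfl
              exact ⟨hp, hp2, hvp⟩]
        rw [show (Finset.range ac.m).filter (fun j => ¬(j % 2 = 0) ∧ v ∈ ac.e j) = {q} by
            ext j
            simp only [Finset.mem_filter, Finset.mem_range, Finset.mem_singleton]
            constructor
            · rintro ⟨hj, hj2, hvj⟩
              rcases huniq j hj hvj with rfl | rfl
              · omega
              · rfl
            · rintro rfl
              exact ⟨hq, by omega, hvq⟩]
        simp
      · rw [show (Finset.range ac.m).filter (fun j => j % 2 = 1 ∧ v ∈ ac.e j) = {q} by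
            ext j
            simp only [Finset.mem_filter, Finset.mem_range, Finset.mem_singleton]
            constructor
            · rintro ⟨hj, hj2, hvj⟩
              rcases huniq j hj hvj with rfl | rfl
              · omega
              · rfl
            · rintro rfl
              exact ⟨hq, hq2, hvq⟩]
        rw [show (Finset.range ac.m).filter (fun j => ¬(j % 2 = 1) ∧ v ∈ ac.e j) = {p} by
            ext j
            simp only [Finset.mem_filter, Finset.mem_range, Finset.mem_singleton]
            constructor
            · rintro ⟨hj, hj2, hvj⟩
              rcases huniq j hj hvj with rfl | rfl
              · rfl
              · omega
            · rintro rfl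
              exact ⟨hp, by omega, hvp⟩]
        simp
    · push_neg at hv
      have hni := ac.not_incident (fun r hrm => hv r hrm)
      rw [show (Finset.range ac.m).filter (fun j => j % 2 = par ∧ v ∈ ac.e j) = ∅ by
          ext j
          simp only [Finset.mem_filter, Finset.mem_range, Finset.notMem_empty, iff_false]
          rintro ⟨hj, -, hvj⟩
          exact hni j hj hvj]
      rw [show (Finset.range ac.m).filter (fun j => ¬(j % 2 = par) ∧ v ∈ ac.e j) = ∅ by
          ext j
          simp only [Finset.mem_filter, Finset.mem_range, Finset.notMem_empty, iff_false]
          rintro ⟨hj, -, hvj⟩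
          exact hni j hj hvj]
  -- filtered class = image of filtered index set
  have himgfilt : ∀ (P : ℕ → Prop) [DecidablePred P] (v : V),
      (((Finset.range ac.m).filter (fun j => P j)).image ac.e).filter (fun e' => v ∈ e')
        = ((Finset.range ac.m).filter (fun j => P j ∧ v ∈ ac.e j)).image ac.e := by
    intro P _ v
    ext e'
    simp only [Finset.mem_filter, Finset.mem_image, Finset.mem_range]
    constructor
    · rintro ⟨⟨j, ⟨hj, hP⟩, rfl⟩, hv⟩
      exact ⟨j, ⟨hj, hP, hv⟩, rfl⟩
    · rintro ⟨j, ⟨hj, hP, hv⟩, rfl⟩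
      exact ⟨⟨j, ⟨hj, hP⟩, rfl⟩, hv⟩
  have hcardimg : ∀ (P : ℕ → Prop) [DecidablePred P],
      ∀ S : Finset ℕ, S ⊆ Finset.range ac.m → (S.image ac.e).card = S.card := by
    intro P _ S hS
    apply Finset.card_image_of_injOn
    intro i hi j hj hEq
    exact ac.e_inj i (Finset.mem_range.1 (hS hi)) j (Finset.mem_range.1 (hS hj)) hEq
  have hdeg : ∀ v : V, degy y v = (ac.m : ℤ) := by
    intro v
    have hexp : degy y v =
        (∑ j ∈ Finset.range ac.m, degy (fun e' => if e' ∈ Msel j then (1 : ℤ) else 0) v)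
        + degy (fun e' => if e' ∈ lightC then (1 : ℤ) else 0) v
        - degy (fun e' => if e' ∈ heavyC then (1 : ℤ) else 0) v := by
      have e1 : (∑ j ∈ Finset.range ac.m,
            ∑ e' ∈ Finset.univ.filter (fun e : Sym2 V => v ∈ e),
              (if e' ∈ Msel j then (1 : ℤ) else 0))
          = ∑ e' ∈ Finset.univ.filter (fun e : Sym2 V => v ∈ e),
              ∑ j ∈ Finset.range ac.m, (if e' ∈ Msel j then (1 : ℤ) else 0) :=
        Finset.sum_comm
      simp only [degy, hy]
      rw [e1, ← Finset.sum_add_distrib, ← Finset.sum_sub_distrib]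
    rw [hexp]
    have h1 : ∀ j ∈ Finset.range ac.m,
        degy (fun e' => if e' ∈ Msel j then (1 : ℤ) else 0) v = 1 := by
      intro j hj
      exact pm_degy_one (hMsel j (Finset.mem_range.1 hj)).1.1 v
    rw [Finset.sum_congr rfl h1, degy_ind_card, degy_ind_card]
    rw [hheavy, hlight, himgfilt, himgfilt]
    rw [hcardimg (fun j => j % 2 = par ∧ v ∈ ac.e j) _ (Finset.filter_subset _ _),
      hcardimg (fun j => ¬(j % 2 = par) ∧ v ∈ ac.e j) _ (Finset.filter_subset _ _)]
    rw [← hcount v]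
    simp
  -- total weight
  have hwt : ∑ e' : Sym2 V, y e' * w e'
      = (ac.m : ℤ) * μ
        + ∑ j ∈ (Finset.range ac.m).filter (fun j => ¬(j % 2 = par)), w (ac.e j)
        - ∑ j ∈ (Finset.range ac.m).filter (fun j => j % 2 = par), w (ac.e j) := by
    simp only [hy, sub_mul, add_mul]
    rw [Finset.sum_sub_distrib, Finset.sum_add_distrib]
    congr 1
    · congr 1
      · have : ∀ e' : Sym2 V,
            (∑ j ∈ Finset.range ac.m, if e' ∈ Msel j then (1 : ℤ) else 0) * w e'
            = ∑ j ∈ Finset.range ac.m, (if e' ∈ Msel j then (1 : ℤ) else 0) * w e' := by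
          intro e'
          rw [Finset.sum_mul]
        rw [Finset.sum_congr rfl (fun e' _ => this e'), Finset.sum_comm]
        have h2 : ∀ j ∈ Finset.range ac.m,
            ∑ e' : Sym2 V, (if e' ∈ Msel j then (1 : ℤ) else 0) * w e'
              = μ := by
          intro j hj
          rw [sum_ind_mul]
          exact hμ j (Finset.mem_range.1 hj)
        rw [Finset.sum_congr rfl h2, Finset.sum_const, Finset.card_range, nsmul_eq_mul]
      · rw [sum_ind_mul, hlight, Finset.sum_image]
        intro i hi j hj hEq
        exact ac.e_inj i (Finset.mem_range.1 (Finset.mem_filter.1 hi).1)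
          j (Finset.mem_range.1 (Finset.mem_filter.1 hj).1) hEq
    · rw [sum_ind_mul, hheavy, Finset.sum_image]
      intro i hi j hj hEq
      exact ac.e_inj i (Finset.mem_range.1 (Finset.mem_filter.1 hi).1)
        j (Finset.mem_range.1 (Finset.mem_filter.1 hj).1) hEq
  -- decompose and contradict
  obtain ⟨Ms, hcard, hpms, hyeq⟩ := decomp hcol ac.m y hynn hsupp hdeg
  have htot : ∑ e' : Sym2 V, y e' * w e' = (Ms.map (fun N => matchWeight w N)).sum := by
    rw [Finset.sum_congr rfl (fun e' _ => by rw [hyeq e']), sum_multiset_ind]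
  have hbound : (ac.m : ℤ) * μ ≤ (Ms.map (fun N => matchWeight w N)).sum := by
    have := Multiset.card_nsmul_le_sum (s := Ms.map (fun N => matchWeight w N)) (a := μ) ?_
    · rwa [Multiset.card_map, hcard, nsmul_eq_mul] at this
    · intro x hx
      obtain ⟨N, hN, rfl⟩ := Multiset.mem_map.1 hx
      exact (hMsel 0 h0m).1.2 N (hpms N hN)
  rw [htot] at hwt
  omega

lemma circ_zero (ac : AltCyc M M') (hcol : ∀ a b : V, s(a, b) ∈ F → col a ≠ col b)
    (w : Sym2 V → ℤ)
    (hmin : ∀ j < ac.m, ∃ Mn, IsMinPM F w Mn ∧ ac.e j ∈ Mn) :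
    ∑ j ∈ Finset.range ac.m, (-1 : ℤ) ^ j * w (ac.e j) = 0 := by
  classical
  have hsplit : ∑ j ∈ Finset.range ac.m, (-1 : ℤ) ^ j * w (ac.e j)
      = ∑ j ∈ (Finset.range ac.m).filter (fun j => j % 2 = 0), w (ac.e j)
        - ∑ j ∈ (Finset.range ac.m).filter (fun j => ¬(j % 2 = 0)), w (ac.e j) := by
    rw [← Finset.sum_filter_add_sum_filter_not (Finset.range ac.m) (fun j => j % 2 = 0)]
    rw [sub_eq_add_neg, ← Finset.sum_neg_distrib]
    congr 1
    · apply Finset.sum_congr rfl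
      intro j hj
      have hj2 : j % 2 = 0 := (Finset.mem_filter.1 hj).2
      rw [(Nat.even_iff.2 hj2).neg_one_pow, one_mul]
    · apply Finset.sum_congr rfl
      intro j hj
      have hj2 : ¬(j % 2 = 0) := (Finset.mem_filter.1 hj).2
      rw [(Nat.odd_iff.2 (by omega)).neg_one_pow]
      ring
  by_contra hne
  rcases lt_trichotomy (∑ j ∈ Finset.range ac.m, (-1 : ℤ) ^ j * w (ac.e j)) 0 with hlt | h0 | hgt
  · -- odd class heavier
    apply circ_zero_aux ac hcol w hmin 1 (by omega)
    have he : (Finset.range ac.m).filter (fun j => ¬(j % 2 = 1))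
        = (Finset.range ac.m).filter (fun j => j % 2 = 0) := by
      apply Finset.filter_congr
      intro j _
      constructor <;> intro h <;> omega
    have ho : (Finset.range ac.m).filter (fun j => j % 2 = 1)
        = (Finset.range ac.m).filter (fun j => ¬(j % 2 = 0)) := by
      apply Finset.filter_congr
      intro j _
      constructor <;> intro h <;> omega
    rw [he, ho]
    omega
  · exact hne h0
  · apply circ_zero_aux ac hcol w hmin 0 (by omega)
    omega


lemma swap_pm {F N M₀ : Finset (Sym2 V)} (hN : IsPMof F N) (hM₀ : IsPMof F M₀)
    (ac : AltCyc N M₀) (w : Sym2 V → ℤ) (C : Finset (Sym2 V))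
    (hC : C = (Finset.range ac.m).image ac.e) :
    IsPMof F ((N \ C) ∪ (M₀ ∩ C)) ∧
    ((((N \ C) ∪ (M₀ ∩ C)) \ M₀) ∪ (M₀ \ ((N \ C) ∪ (M₀ ∩ C)))
      = ((N \ M₀) ∪ (M₀ \ N)) \ C) ∧
    C ⊆ (N \ M₀) ∪ (M₀ \ N) ∧ C.Nonempty ∧
    matchWeight w ((N \ C) ∪ (M₀ ∩ C)) =
      matchWeight w N - (∑ j ∈ (Finset.range ac.m).filter (fun j => j % 2 = 0), w (ac.e j))
        + ∑ j ∈ (Finset.range ac.m).filter (fun j => ¬(j % 2 = 0)), w (ac.e j) := by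
  classical
  have hm := ac.hm
  have hmemC : ∀ e', e' ∈ C ↔ ∃ j < ac.m, e' = ac.e j := by
    intro e'
    simp only [hC, Finset.mem_image, Finset.mem_range]
    constructor
    · rintro ⟨j, hj, rfl⟩; exact ⟨j, hj, rfl⟩
    · rintro ⟨j, hj, rfl⟩; exact ⟨j, hj, rfl⟩
  have hside : ∀ j < ac.m, (j % 2 = 0 → ac.e j ∈ N ∧ ac.e j ∉ M₀) ∧
      (j % 2 = 1 → ac.e j ∈ M₀ ∧ ac.e j ∉ N) := by
    intro j hj
    have h := ac.hedge j hj
    constructor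
    · intro h2
      have := h.1 h2
      rw [Finset.mem_sdiff] at this
      exact this
    · intro h2
      have := h.2 h2
      rw [Finset.mem_sdiff] at this
      exact this
  have hCside : ∀ e' ∈ C, (e' ∈ N ∧ e' ∉ M₀) ∨ (e' ∈ M₀ ∧ e' ∉ N) := by
    intro e' he'
    obtain ⟨j, hj, rfl⟩ := (hmemC e').1 he'
    rcases Nat.mod_two_eq_zero_or_one j with h | h
    · exact Or.inl ((hside j hj).1 h)
    · exact Or.inr ((hside j hj).2 h)
  set N' := (N \ C) ∪ (M₀ ∩ C) with hN'
  have hN'm : ∀ e', e' ∈ N' ↔ ((e' ∈ N ∧ e' ∉ C) ∨ (e' ∈ M₀ ∧ e' ∈ C)) := by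
    intro e'
    simp only [hN', Finset.mem_union, Finset.mem_sdiff, Finset.mem_inter]
  have hpm : IsPMof F N' := by
    constructor
    · intro e' he'
      rcases (hN'm e').1 he' with ⟨h1, -⟩ | ⟨h1, -⟩
      · exact hN.1 h1
      · exact hM₀.1 h1
    · intro v
      by_cases hv : ∃ r, r < ac.m ∧ v = ac.x r
      · obtain ⟨r, hr, hvr⟩ := hv
        obtain ⟨p, q, hp, hq, hp2, hq2, hvp, hvq, huniq⟩ := ac.incident hr hvr
        have hepN : ac.e p ∈ N ∧ ac.e p ∉ M₀ := (hside p hp).1 hp2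
        have heqM : ac.e q ∈ M₀ ∧ ac.e q ∉ N := (hside q hq).2 hq2
        have heqC : ac.e q ∈ C := (hmemC _).2 ⟨q, hq, rfl⟩
        have hepC : ac.e p ∈ C := (hmemC _).2 ⟨p, hp, rfl⟩
        refine ⟨ac.e q, ⟨(hN'm _).2 (Or.inr ⟨heqM.1, heqC⟩), hvq⟩, ?_⟩
        rintro e' ⟨he', hve'⟩
        rcases (hN'm e').1 he' with ⟨h1, h2⟩ | ⟨h1, h2⟩
        · -- e' ∈ N, ∉ C : but the N-edge at v is ac.e p ∈ C
          exfalso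
          obtain ⟨e₀, he₀, hu⟩ := hN.2 v
          have ha := hu e' ⟨h1, hve'⟩
          have hb := hu (ac.e p) ⟨hepN.1, hvp⟩
          rw [ha, ← hb] at h2
          exact h2 hepC
        · obtain ⟨j, hj, rfl⟩ := (hmemC e').1 h2
          rcases huniq j hj hve' with rfl | rfl
          · exact absurd h1 ((hside j hj).1 hp2).2
          · rfl
      · push_neg at hv
        have hni := ac.not_incident (fun r hrm => hv r hrm)
        have hnotC : ∀ e', v ∈ e' → e' ∉ C := by
          intro e' hve' hC'
          obtain ⟨j, hj, rfl⟩ := (hmemC e').1 hC'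
          exact hni j hj hve'
        obtain ⟨e₀, ⟨he₀N, he₀v⟩, hu⟩ := hN.2 v
        refine ⟨e₀, ⟨(hN'm _).2 (Or.inl ⟨he₀N, hnotC _ he₀v⟩), he₀v⟩, ?_⟩
        rintro e' ⟨he', hve'⟩
        rcases (hN'm e').1 he' with ⟨h1, h2⟩ | ⟨h1, h2⟩
        · exact hu e' ⟨h1, hve'⟩
        · exact absurd h2 (hnotC _ hve')
  refine ⟨hpm, ?_, ?_, ?_, ?_⟩
  · ext e'
    simp only [Finset.mem_union, Finset.mem_sdiff, hN'm e', Finset.mem_union]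
    by_cases hc : e' ∈ C
    · rcases hCside e' hc with ⟨h1, h2⟩ | ⟨h1, h2⟩ <;> simp [hc, h1, h2]
    · by_cases h1 : e' ∈ N <;> by_cases h2 : e' ∈ M₀ <;> simp [hc, h1, h2]
  · intro e' he'
    rw [Finset.mem_union, Finset.mem_sdiff, Finset.mem_sdiff]
    rcases hCside e' he' with h | h
    · exact Or.inl h
    · exact Or.inr h
  · exact ⟨ac.e 0, (hmemC _).2 ⟨0, by omega, rfl⟩⟩
  · have hdisj : Disjoint (N \ C) (M₀ ∩ C) := by
      rw [Finset.disjoint_left]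
      intro e' h1 h2
      exact (Finset.mem_sdiff.1 h1).2 (Finset.mem_inter.1 h2).2
    have hNC : N ∩ C = ((Finset.range ac.m).filter (fun j => j % 2 = 0)).image ac.e := by
      ext e'
      simp only [Finset.mem_inter, Finset.mem_image, Finset.mem_filter, Finset.mem_range]
      constructor
      · rintro ⟨h1, h2⟩
        obtain ⟨j, hj, rfl⟩ := (hmemC e').1 h2
        rcases Nat.mod_two_eq_zero_or_one j with h | h
        · exact ⟨j, ⟨hj, h⟩, rfl⟩
        · exact absurd h1 ((hside j hj).2 h).2
      · rintro ⟨j, ⟨hj, h⟩, rfl⟩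
        exact ⟨((hside j hj).1 h).1, (hmemC _).2 ⟨j, hj, rfl⟩⟩
    have hMC : M₀ ∩ C = ((Finset.range ac.m).filter (fun j => ¬(j % 2 = 0))).image ac.e := by
      ext e'
      simp only [Finset.mem_inter, Finset.mem_image, Finset.mem_filter, Finset.mem_range]
      constructor
      · rintro ⟨h1, h2⟩
        obtain ⟨j, hj, rfl⟩ := (hmemC e').1 h2
        rcases Nat.mod_two_eq_zero_or_one j with h | h
        · exact absurd h1 ((hside j hj).1 h).2
        · exact ⟨j, ⟨hj, by omega⟩, rfl⟩
      · rintro ⟨j, ⟨hj, h⟩, rfl⟩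
        exact ⟨((hside j hj).2 (by omega)).1, (hmemC _).2 ⟨j, hj, rfl⟩⟩
    have himg : ∀ (P : ℕ → Prop) [DecidablePred P],
        ∑ e' ∈ ((Finset.range ac.m).filter (fun j => P j)).image ac.e, w e'
          = ∑ j ∈ (Finset.range ac.m).filter (fun j => P j), w (ac.e j) := by
      intro P _
      rw [Finset.sum_image]
      intro i hi j hj hEq
      exact ac.e_inj i (Finset.mem_range.1 (Finset.mem_filter.1 hi).1)
        j (Finset.mem_range.1 (Finset.mem_filter.1 hj).1) hEq
    have e1 : matchWeight w N' = ∑ e' ∈ N \ C, w e' + ∑ e' ∈ M₀ ∩ C, w e' := by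
      rw [hN']
      exact Finset.sum_union hdisj
    have e2 : ∑ e' ∈ N ∩ C, w e' + ∑ e' ∈ N \ C, w e' = matchWeight w N :=
      Finset.sum_inter_add_sum_sdiff N C w
    rw [e1, hMC, himg]
    have e3 : ∑ e' ∈ N ∩ C, w e'
        = ∑ j ∈ (Finset.range ac.m).filter (fun j => j % 2 = 0), w (ac.e j) := by
      rw [hNC, himg]
    omega

lemma pm_of_subset {F F' M : Finset (Sym2 V)} (h : IsPMof F M) (hs : M ⊆ F') :
    IsPMof F' M := ⟨hs, h.2⟩

/-- every perfect matching of the union of minimum-weight PMs has minimum weight -/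
lemma pm_weight_eq {F G0 : Finset (Sym2 V)} {col : V → Bool}
    (hcolG : ∀ a b : V, s(a, b) ∈ G0 → col a ≠ col b)
    (w : Sym2 V → ℤ)
    (hFdef : ∀ e, e ∈ F ↔ ∃ Mn, IsPMof G0 Mn ∧
      (∀ M', IsPMof G0 M' → matchWeight w Mn ≤ matchWeight w M') ∧ e ∈ Mn)
    (M₀ : Finset (Sym2 V)) (hM₀ : IsMinPM G0 w M₀) :
    ∀ N, IsPMof F N → matchWeight w N = matchWeight w M₀ := by
  classical
  have hFG : F ⊆ G0 := by
    intro e he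
    obtain ⟨Mn, hMn, -, heMn⟩ := (hFdef e).1 he
    exact hMn.1 heMn
  have hcolF : ∀ a b : V, s(a, b) ∈ F → col a ≠ col b := fun a b h => hcolG a b (hFG h)
  have hM₀F : M₀ ⊆ F := by
    intro e he
    exact (hFdef e).2 ⟨M₀, hM₀.1, hM₀.2, he⟩
  have hM₀pmF : IsPMof F M₀ := pm_of_subset hM₀.1 hM₀F
  suffices H : ∀ n, ∀ N, IsPMof F N → ((N \ M₀) ∪ (M₀ \ N)).card = n →
      matchWeight w N = matchWeight w M₀ by
    exact fun N hN => H _ N hN rfl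
  intro n
  induction n using Nat.strong_induction_on with
  | _ n ih =>
    intro N hNpm hcard
    by_cases hNM : N = M₀
    · rw [hNM]
    · obtain ⟨ac⟩ := exists_altCyc col hcolF hNpm hM₀pmF hNM
      set C : Finset (Sym2 V) := (Finset.range ac.m).image ac.e with hC
      obtain ⟨hpm', hsd, hCsub, hCne, hwt⟩ := swap_pm hNpm hM₀pmF ac w C hC
      have hcircz : ∑ j ∈ Finset.range ac.m, (-1 : ℤ) ^ j * w (ac.e j) = 0 := by
        apply circ_zero ac hcolG w
        intro j hj
        have hejF : ac.e j ∈ F := by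
          have h := ac.hedge j hj
          rcases Nat.mod_two_eq_zero_or_one j with h2 | h2
          · exact hNpm.1 (Finset.mem_sdiff.1 (h.1 h2)).1
          · exact hM₀pmF.1 (Finset.mem_sdiff.1 (h.2 h2)).1
        obtain ⟨Mn, h1, h2, h3⟩ := (hFdef _).1 hejF
        exact ⟨Mn, ⟨h1, h2⟩, h3⟩
      have hsplit : ∑ j ∈ Finset.range ac.m, (-1 : ℤ) ^ j * w (ac.e j)
          = ∑ j ∈ (Finset.range ac.m).filter (fun j => j % 2 = 0), w (ac.e j)
            - ∑ j ∈ (Finset.range ac.m).filter (fun j => ¬(j % 2 = 0)), w (ac.e j) := by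
        rw [← Finset.sum_filter_add_sum_filter_not (Finset.range ac.m) (fun j => j % 2 = 0)]
        rw [sub_eq_add_neg, ← Finset.sum_neg_distrib]
        congr 1
        · apply Finset.sum_congr rfl
          intro j hj
          rw [(Nat.even_iff.2 (Finset.mem_filter.1 hj).2).neg_one_pow, one_mul]
        · apply Finset.sum_congr rfl
          intro j hj
          have hj2 := (Finset.mem_filter.1 hj).2
          rw [(Nat.odd_iff.2 (by omega)).neg_one_pow]
          ring
      have hweq : matchWeight w ((N \ C) ∪ (M₀ ∩ C)) = matchWeight w N := by
        rw [hwt]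
        omega
      have hcard' : ((((N \ C) ∪ (M₀ ∩ C)) \ M₀) ∪ (M₀ \ ((N \ C) ∪ (M₀ ∩ C)))).card < n := by
        rw [hsd, ← hcard]
        exact Finset.card_lt_card (Finset.sdiff_ssubset hCsub hCne)
      have := ih _ hcard' ((N \ C) ∪ (M₀ ∩ C)) hpm' rfl
      rw [← hweq, this]


end IsoAux
-- appended to build.lean
namespace IsoAux
variable {V : Type*} [Fintype V] [DecidableEq V]

lemma tail_bound (B : ℤ) (hB2 : 2 ≤ B) (c : ℕ → ℤ) (hi : ℕ) :
    ∀ d lo, lo + d = hi → (∀ j, lo ≤ j → j < hi → |c j| ≤ B - 1) →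
    |∑ j ∈ Finset.Ico lo hi, c j * B ^ (hi - 1 - j)| ≤ B ^ d - 1 := by
  intro d
  induction d with
  | zero =>
    intro lo hlo hc
    rw [show hi = lo from by omega]
    simp
  | succ n ihn =>
    intro lo hlo hc
    have hlt : lo < hi := by omega
    rw [Finset.sum_eq_sum_Ico_succ_bot hlt]
    have h1 := ihn (lo + 1) (by omega) (fun j hj1 hj2 => hc j (by omega) hj2)
    have h2 : |c lo * B ^ (hi - 1 - lo)| ≤ (B - 1) * B ^ n := by
      rw [abs_mul]
      have h3 : |B ^ (hi - 1 - lo)| = B ^ n := by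
        rw [abs_pow, abs_of_nonneg (by omega : (0:ℤ) ≤ B), show hi - 1 - lo = n from by omega]
      rw [h3]
      exact mul_le_mul_of_nonneg_right (hc lo le_rfl hlt) (by positivity)
    have h4 := abs_add_le (c lo * B ^ (hi - 1 - lo)) (∑ j ∈ Finset.Ico (lo+1) hi, c j * B ^ (hi - 1 - j))
    have h5 : B ^ (n + 1) = B ^ n * B := pow_succ B n
    have h6 : (0:ℤ) < B ^ n := by positivity
    nlinarith [h1, h2, h4]

end IsoAux

open IsoAux in
theorem combined_weight_isolating {V : Type*} [Fintype V] [DecidableEq V]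
    (G : SimpleGraph V) [DecidableRel G.Adj] (hbip : G.Colorable 2)
    (hn : 2 ≤ Fintype.card V)
    (k : ℕ) (hkdef : k = Nat.clog 2 (Fintype.card V) - 1)
    (w : ℕ → Sym2 V → ℤ) (hwpos : ∀ i < k, ∀ e, 0 < w i e)
    (E : ℕ → Finset (Sym2 V))
    (hE0 : E 0 = G.edgeFinset)
    (hpm : ∃ M, IsPMof (E 0) M)
    (hEsucc : ∀ i < k, ∀ e, e ∈ E (i + 1) ↔
      ∃ M, IsPMof (E i) M ∧
        (∀ M', IsPMof (E i) M' → matchWeight (w i) M ≤ matchWeight (w i) M') ∧ e ∈ M)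
    (hcirc : ∀ i < k, ∀ (v : V)
      (c : (SimpleGraph.fromEdgeSet (↑(E i) : Set (Sym2 V))).Walk v v),
      c.IsCycle → c.length ≤ 2 ^ (i + 2) → circulation (w i) c.edges ≠ 0)
    (B : ℤ) (hB : ∀ i < k, ∀ M, IsPMof (E 0) M → matchWeight (w i) M < B) :
    ∃! M : Finset (Sym2 V), IsPMof (E 0) M ∧
      ∀ M', IsPMof (E 0) M' →
        matchWeight (fun e => ∑ j ∈ Finset.range k, w j e * B ^ (k - 1 - j)) M ≤
          matchWeight (fun e => ∑ j ∈ Finset.range k, w j e * B ^ (k - 1 - j)) M' := by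
  classical
  obtain ⟨Co⟩ := hbip
  set col : V → Bool := fun v => Co v == 1 with hcoldef
  have hcol0 : ∀ a b : V, s(a, b) ∈ E 0 → col a ≠ col b := by
    intro a b hab
    have hadj : G.Adj a b := by
      rw [hE0, SimpleGraph.mem_edgeFinset] at hab
      exact hab
    have hne := Co.valid hadj
    have key : ∀ (p q : Fin 2), p ≠ q → ((p == 1) ≠ (q == 1)) := by decide
    exact key _ _ hne
  have hEmono : ∀ i < k, E (i + 1) ⊆ E i := by
    intro i hik e he
    obtain ⟨Mn, hMn, -, heMn⟩ := (hEsucc i hik e).1 he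
    exact hMn.1 heMn
  have hstep : ∀ i ≤ k, ∀ j ≤ i, E i ⊆ E j := by
    intro i
    induction i with
    | zero =>
      intro _ j hj
      rw [show j = 0 from by omega]
    | succ n ihn =>
      intro hik j hj
      rcases Nat.lt_or_ge j (n + 1) with h | h
      · exact (hEmono n (by omega)).trans (ihn (by omega) j (by omega))
      · rw [show j = n + 1 from by omega]
  have hcolE : ∀ i ≤ k, ∀ a b : V, s(a, b) ∈ E i → col a ≠ col b :=
    fun i hi a b h => hcol0 a b (hstep i hi 0 (by omega) h)
  -- existence of minimum-weight PMs
  have hminex : ∀ (Fb : Finset (Sym2 V)) (wgt : Sym2 V → ℤ), (∃ M, IsPMof Fb M) →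
      ∃ M₀, IsMinPM Fb wgt M₀ := by
    rintro Fb wgt ⟨M, hM⟩
    obtain ⟨M₀, hM₀S, hmin⟩ := Finset.exists_min_image
      ((Fb.powerset).filter (fun X => IsPMof Fb X)) (matchWeight wgt)
      ⟨M, Finset.mem_filter.2 ⟨Finset.mem_powerset.2 hM.1, hM⟩⟩
    exact ⟨M₀, (Finset.mem_filter.1 hM₀S).2, fun M' hM' =>
      hmin M' (Finset.mem_filter.2 ⟨Finset.mem_powerset.2 hM'.1, hM'⟩)⟩
  have hpmE : ∀ i ≤ k, ∃ M, IsPMof (E i) M := by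
    intro i
    induction i with
    | zero => intro _; exact hpm
    | succ n ihn =>
      intro hik
      obtain ⟨M₀, hM₀⟩ := hminex (E n) (w n) (ihn (by omega))
      have hsub : M₀ ⊆ E (n + 1) := by
        intro e he
        exact (hEsucc n (by omega) e).2 ⟨M₀, hM₀.1, hM₀.2, he⟩
      exact ⟨M₀, pm_of_subset hM₀.1 hsub⟩
  -- cardinality bound
  have hclogk : Nat.clog 2 (Fintype.card V) ≤ k + 1 := by
    by_contra h
    omega
  have hcardpow : Fintype.card V ≤ 2 ^ (k + 1) :=
    (Nat.clog_le_iff_le_pow (by norm_num : 1 < 2)).1 hclogk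
  -- uniqueness of the perfect matching of E k
  have hwalkcyc : ∀ (Mx My : Finset (Sym2 V)), IsPMof (E k) Mx → IsPMof (E k) My →
      Mx = My := by
    intro Mx My hMx hMy
    by_contra hne
    obtain ⟨ac⟩ := exists_altCyc col (hcolE k le_rfl) hMx hMy hne
    have hmcard : ac.m ≤ Fintype.card V := by
      have h1 : (Finset.range ac.m).card ≤ (Finset.univ : Finset V).card := by
        apply Finset.card_le_card_of_injOn ac.x (fun a _ => Finset.mem_univ _)
        intro a ha b hb hEq
        exact ac.hinj a (Finset.mem_range.1 ha) b (Finset.mem_range.1 hb) hEq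
      simpa using h1
    rcases Nat.eq_zero_or_pos k with hk0 | hkpos
    · have hm := ac.hm
      rw [hk0] at hcardpow
      norm_num at hcardpow
      omega
    · set i := k - 1 with hidef
      have hik : i < k := by omega
      have hik1 : i + 1 = k := by omega
      have hsubx : Mx ⊆ E i := hMx.1.trans (hstep k le_rfl i (by omega))
      have hsuby : My ⊆ E i := hMy.1.trans (hstep k le_rfl i (by omega))
      obtain ⟨c, hcyc, hedges, hlen⟩ := ac.exists_walk hsubx hsuby
      refine absurd ?_ (hcirc i hik (ac.x 0) c hcyc ?_)
      · have hz : ∑ j ∈ Finset.range ac.m, (-1 : ℤ) ^ j * (w i) (ac.e j) = 0 := by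
          apply circ_zero ac (hcolE i (by omega)) (w i)
          intro j hj
          have hejEk : ac.e j ∈ E k := by
            have h := ac.hedge j hj
            rcases Nat.mod_two_eq_zero_or_one j with h2 | h2
            · exact hMx.1 (Finset.mem_sdiff.1 (h.1 h2)).1
            · exact hMy.1 (Finset.mem_sdiff.1 (h.2 h2)).1
          obtain ⟨Mn, h1, h2, h3⟩ := (hEsucc i hik _).1 (by rw [hik1]; exact hejEk)
          exact ⟨Mn, ⟨h1, h2⟩, h3⟩
        show |altSum (c.edges.map (w i))| = 0
        rw [hedges, List.map_map,
          show (w i) ∘ ac.e = fun j => (w i) (ac.e j) from rfl, altSum_range, hz]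
        simp
      · rw [hlen]
        calc ac.m ≤ Fintype.card V := hmcard
          _ ≤ 2 ^ (k + 1) := hcardpow
          _ ≤ 2 ^ (i + 2) := by rw [show i + 2 = k + 1 from by omega]
  -- the unique PM of E k
  obtain ⟨Mstar, hMstar⟩ := hpmE k le_rfl
  have hMstarsub : ∀ i ≤ k, Mstar ⊆ E i := fun i hi => hMstar.1.trans (hstep k le_rfl i hi)
  have hMstar0 : IsPMof (E 0) Mstar := pm_of_subset hMstar (hMstarsub 0 (by omega))
  -- weight structure at each level
  have hlevel : ∀ j : ℕ, ∃ μ : ℤ, j < k →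
      ((∀ N, IsPMof (E (j+1)) N → matchWeight (w j) N = μ) ∧
       (∀ N, IsPMof (E j) N → μ ≤ matchWeight (w j) N) ∧
       (∀ N, IsPMof (E j) N → matchWeight (w j) N = μ → N ⊆ E (j+1))) := by
    intro j
    by_cases hjk : j < k
    · obtain ⟨M₀, hM₀⟩ := hminex (E j) (w j) (hpmE j (by omega))
      refine ⟨matchWeight (w j) M₀, fun _ => ⟨?_, fun N hN => hM₀.2 N hN, ?_⟩⟩
      · exact pm_weight_eq (hcolE j (by omega)) (w j) (fun e => hEsucc j hjk e) M₀ hM₀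
      · intro N hN hNeq e he
        refine (hEsucc j hjk e).2 ⟨N, hN, ?_, he⟩
        intro M' hM'
        rw [hNeq]
        exact hM₀.2 M' hM'
    · exact ⟨0, fun h => absurd h hjk⟩
  choose μ hμ using hlevel
  -- the combined weight
  set W : Sym2 V → ℤ := fun e => ∑ j ∈ Finset.range k, w j e * B ^ (k - 1 - j) with hWdef
  have hWsum : ∀ Mx : Finset (Sym2 V),
      matchWeight W Mx = ∑ j ∈ Finset.range k, matchWeight (w j) Mx * B ^ (k - 1 - j) := by
    intro Mx
    rw [show matchWeight W Mx
        = ∑ e ∈ Mx, ∑ j ∈ Finset.range k, w j e * B ^ (k - 1 - j) from rfl]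
    rw [Finset.sum_comm]
    apply Finset.sum_congr rfl
    intro j _
    rw [show matchWeight (w j) Mx = ∑ e ∈ Mx, w j e from rfl, Finset.sum_mul]
  have hPMne : ∀ Mx, IsPMof (E 0) Mx → Mx.Nonempty := by
    intro Mx hMx
    obtain ⟨v⟩ : Nonempty V := Fintype.card_pos_iff.1 (by omega)
    obtain ⟨e, ⟨he, -⟩, -⟩ := hMx.2 v
    exact ⟨e, he⟩
  have hwlb : ∀ j, j < k → ∀ Mx, IsPMof (E 0) Mx → 1 ≤ matchWeight (w j) Mx := by
    intro j hj Mx hMx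
    have hpos : 0 < matchWeight (w j) Mx :=
      Finset.sum_pos (fun e _ => hwpos j hj e) (hPMne Mx hMx)
    omega
  -- the key strict inequality
  have hkey : ∀ Mx, IsPMof (E 0) Mx → Mx ≠ Mstar →
      matchWeight W Mstar < matchWeight W Mx := by
    intro Mx hMx hne
    have hnotk : ¬ (Mx ⊆ E k) := by
      intro hsub
      exact hne (hwalkcyc Mx Mstar (pm_of_subset hMx hsub) hMstar)
    have hex : ∃ i, ¬ (Mx ⊆ E i) := ⟨k, hnotk⟩
    have hi₀spec : ¬ (Mx ⊆ E (Nat.find hex)) := Nat.find_spec hex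
    have hi₀pos : 0 < Nat.find hex := by
      rcases Nat.eq_zero_or_pos (Nat.find hex) with h | h
      · rw [h] at hi₀spec; exact absurd hMx.1 hi₀spec
      · exact h
    have hi₀k : Nat.find hex ≤ k := by
      by_contra h
      exact (Nat.find_min hex (by omega : k < Nat.find hex)) hnotk
    set i := Nat.find hex - 1 with hidef
    have hik : i < k := by omega
    have hMxEi : Mx ⊆ E i := by
      have h := Nat.find_min hex (show i < Nat.find hex by omega)
      exact not_not.1 h
    have hMxEi1 : ¬ Mx ⊆ E (i + 1) := by
      rw [show i + 1 = Nat.find hex from by omega]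
      exact hi₀spec
    have hB2 : 2 ≤ B := by
      have h1 := hB i hik Mx hMx
      have h2 := hwlb i hik Mx hMx
      omega
    -- per-level comparisons
    have hstareq : ∀ j, j < k → matchWeight (w j) Mstar = μ j := by
      intro j hjk
      exact (hμ j hjk).1 Mstar (pm_of_subset hMstar (hMstarsub (j+1) (by omega)))
    have hMxeq : ∀ j, j < i → matchWeight (w j) Mx = μ j := by
      intro j hji
      have hsub : Mx ⊆ E (j + 1) := fun e he => hstep i (by omega) (j+1) (by omega) (hMxEi he)
      exact (hμ j (by omega)).1 Mx (pm_of_subset hMx hsub)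
    have hMxgt : μ i + 1 ≤ matchWeight (w i) Mx := by
      have hpmEi : IsPMof (E i) Mx := pm_of_subset hMx hMxEi
      have hle := (hμ i hik).2.1 Mx hpmEi
      have hneq : matchWeight (w i) Mx ≠ μ i :=
        fun h => hMxEi1 ((hμ i hik).2.2 Mx hpmEi h)
      omega
    set c : ℕ → ℤ := fun j => matchWeight (w j) Mx - matchWeight (w j) Mstar with hcdef
    have hsumc : matchWeight W Mx - matchWeight W Mstar
        = ∑ j ∈ Finset.range k, c j * B ^ (k - 1 - j) := by
      rw [hWsum, hWsum, ← Finset.sum_sub_distrib]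
      apply Finset.sum_congr rfl
      intro j _
      rw [hcdef, sub_mul]
    have hsplit : ∑ j ∈ Finset.range k, c j * B ^ (k - 1 - j)
        = (∑ j ∈ Finset.range i, c j * B ^ (k - 1 - j)) + c i * B ^ (k - 1 - i)
          + ∑ j ∈ Finset.Ico (i + 1) k, c j * B ^ (k - 1 - j) := by
      rw [Finset.range_eq_Ico,
        ← Finset.sum_Ico_consecutive _ (by omega : 0 ≤ i + 1) (by omega : i + 1 ≤ k),
        ← Finset.range_eq_Ico, Finset.sum_range_succ]
    have hzero : ∑ j ∈ Finset.range i, c j * B ^ (k - 1 - j) = 0 := by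
      apply Finset.sum_eq_zero
      intro j hj
      have hji := Finset.mem_range.1 hj
      show (matchWeight (w j) Mx - matchWeight (w j) Mstar) * B ^ (k - 1 - j) = 0
      rw [hMxeq j hji, hstareq j (by omega)]
      ring
    have hci : 1 ≤ c i := by
      show 1 ≤ matchWeight (w i) Mx - matchWeight (w i) Mstar
      have := hstareq i hik
      omega
    have hcb : ∀ j, i + 1 ≤ j → j < k → |c j| ≤ B - 1 := by
      intro j hj1 hj2
      show |matchWeight (w j) Mx - matchWeight (w j) Mstar| ≤ B - 1
      rw [abs_le]
      have h1 := hB j hj2 Mx hMx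
      have h2 := hB j hj2 Mstar hMstar0
      have h3 := hwlb j hj2 Mx hMx
      have h4 := hwlb j hj2 Mstar hMstar0
      omega
    have htail := tail_bound B hB2 c k (k - (i+1)) (i+1) (by omega) hcb
    have htail' := (abs_le.1 htail).1
    have hpowe : B ^ (k - (i + 1)) = B ^ (k - 1 - i) := by
      rw [show k - (i + 1) = k - 1 - i from by omega]
    rw [hpowe] at htail'
    have hpowpos : (0:ℤ) < B ^ (k - 1 - i) := by positivity
    have hcib : B ^ (k - 1 - i) ≤ c i * B ^ (k - 1 - i) := by
      nlinarith
    have : 0 < ∑ j ∈ Finset.range k, c j * B ^ (k - 1 - j) := by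
      rw [hsplit, hzero]
      linarith
    omega
  refine ⟨Mstar, ⟨hMstar0, ?_⟩, ?_⟩
  · intro M' hM'
    by_cases h : M' = Mstar
    · rw [h]
    · exact le_of_lt (hkey M' hM' h)
  · rintro My ⟨hMy, hMymin⟩
    by_contra hne
    have h1 := hkey My hMy hne
    have h2 := hMymin Mstar hMstar0
    omega
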